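/- For all polynomials f and g, S_x(fg) = (D_x f)(D_x g) U₂ + (S_x f)(S_x g), where U₂(z) := (α² - 1)z² + 2β(α+1)z + δ, α := (q^{1/2}+q^{-1/2})/2, β := (1-α)𝔠₃, and δ := (α²-1)(𝔠₃² - 4𝔠₁𝔠₂). -/

import Mathlib

open Polynomial

noncomputable def alphaSeq (q : ℝ) (n : ℤ) : ℝ :=
  (q ^ ((n : ℝ) / 2) + q ^ (-(n : ℝ) / 2)) / 2

noncomputable def gammaSeq (q : ℝ) (n : ℤ) : ℝ :=
  (q ^ ((n : ℝ) / 2) - q ^ (-(n : ℝ) / 2)) /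
    (q ^ ((1 : ℝ) / 2) - q ^ (-(1 : ℝ) / 2))

noncomputable def latticeX (q : ℝ) (c1 c2 c3 : ℂ) (s : ℝ) : ℂ :=
  c1 * (q : ℂ) ^ (-(s : ℂ)) + c2 * (q : ℂ) ^ ((s : ℂ)) + c3

def IsDx (q : ℝ) (c1 c2 c3 : ℂ) (f Df : Polynomial ℂ) : Prop :=
  ∀ s : ℝ,
    Df.eval (latticeX q c1 c2 c3 s) *
        (latticeX q c1 c2 c3 (s + 1 / 2) - latticeX q c1 c2 c3 (s - 1 / 2)) =
      f.eval (latticeX q c1 c2 c3 (s + 1 / 2)) - f.eval (latticeX q c1 c2 c3 (s - 1 / 2))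

def IsSx (q : ℝ) (c1 c2 c3 : ℂ) (f Sf : Polynomial ℂ) : Prop :=
  ∀ s : ℝ,
    Sf.eval (latticeX q c1 c2 c3 s) =
      (f.eval (latticeX q c1 c2 c3 (s + 1 / 2)) + f.eval (latticeX q c1 c2 c3 (s - 1 / 2))) / 2

lemma latticeX_eq (q : ℝ) (hq : 0 < q) (c1 c2 c3 : ℂ) (s : ℝ) :
    latticeX q c1 c2 c3 s = c1 * ((q ^ s : ℝ) : ℂ)⁻¹ + c2 * ((q ^ s : ℝ) : ℂ) + c3 := by
  unfold latticeX
  rw [Complex.cpow_neg, ← Complex.ofReal_cpow hq.le]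

lemma alphaSeq_one (q : ℝ) (hq : 0 < q) :
    alphaSeq q 1 = (q ^ ((1:ℝ)/2) + (q ^ ((1:ℝ)/2))⁻¹) / 2 := by
  simp only [alphaSeq, Int.cast_one]
  rw [neg_div, Real.rpow_neg hq.le]

lemma latticeX_swap (q : ℝ) (c1 c2 c3 : ℂ) (s : ℝ) :
    latticeX q c1 c2 c3 s = latticeX q c2 c1 c3 (-s) := by
  unfold latticeX
  push_cast
  rw [neg_neg]
  ring

lemma range_infinite_aux (q : ℝ) (hq : 0 < q) (hq1 : q ≠ 1) (c1 c2 c3 : ℂ) (hc2 : c2 ≠ 0) :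
    (Set.range (latticeX q c1 c2 c3)).Infinite := by
  set R : ℝ := ‖c1‖ / ‖c2‖ with hR
  have hR0 : 0 ≤ R := div_nonneg (by positivity) (by positivity)
  set t : ℕ → ℝ := fun n => R + 1 + n with ht
  have htpos : ∀ n, 0 < t n := by intro n; simp only [ht]; positivity
  apply Set.infinite_of_injective_forall_mem
    (f := fun n : ℕ => latticeX q c1 c2 c3 (Real.logb q (t n)))
  · intro m n h
    simp only [latticeX_eq q hq, Real.rpow_logb hq hq1 (htpos _)] at h
    by_contra hmn
    have htm : t m ≠ t n := by
      simp only [ht]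
      intro hh
      have : (m:ℝ) = (n:ℝ) := by linarith
      exact hmn (Nat.cast_injective this)
    have htmC : ((t m : ℝ) : ℂ) ≠ ((t n : ℝ) : ℂ) := by
      exact_mod_cast htm
    have htm0 : ((t m : ℝ) : ℂ) ≠ 0 := by exact_mod_cast (htpos m).ne'
    have htn0 : ((t n : ℝ) : ℂ) ≠ 0 := by exact_mod_cast (htpos n).ne'
    have h' : c1 * ((t m : ℝ) : ℂ)⁻¹ + c2 * ((t m : ℝ) : ℂ)
        = c1 * ((t n : ℝ) : ℂ)⁻¹ + c2 * ((t n : ℝ) : ℂ) := by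
      linear_combination h
    field_simp at h'
    have hfac : (((t m : ℝ) : ℂ) - ((t n : ℝ) : ℂ)) *
        (c2 * (((t m : ℝ) : ℂ) * ((t n : ℝ) : ℂ)) - c1) = 0 := by
      linear_combination h'
    rcases mul_eq_zero.mp hfac with h1 | h2
    · exact htmC (sub_eq_zero.mp h1)
    · have h3 : c2 * (((t m * t n : ℝ)) : ℂ) = c1 := by
        push_cast
        linear_combination h2
      have habs : ‖c2‖ * (t m * t n) = ‖c1‖ := by
        have := congrArg (‖·‖) h3
        rwa [norm_mul, Complex.norm_real, Real.norm_eq_abs, abs_of_pos (by positivity)] at this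
      have hc2' : 0 < ‖c2‖ := norm_pos_iff.mpr hc2
      have hprod : t m * t n = R := by
        rw [hR]
        field_simp
        linarith [habs]
      have h5 : R + 1 ≤ t m := by simp only [ht]; linarith [Nat.cast_nonneg (α:=ℝ) m]
      have h6 : R + 1 ≤ t n := by simp only [ht]; linarith [Nat.cast_nonneg (α:=ℝ) n]
      nlinarith
  · intro n
    exact Set.mem_range_self _

lemma range_infinite (q : ℝ) (hq : 0 < q) (hq1 : q ≠ 1) (c1 c2 c3 : ℂ)
    (hc : ¬(c1 = 0 ∧ c2 = 0)) :
    (Set.range (latticeX q c1 c2 c3)).Infinite := by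
  by_cases h2 : c2 = 0
  · have h1 : c1 ≠ 0 := fun h => hc ⟨h, h2⟩
    have : Set.range (latticeX q c1 c2 c3) = Set.range (latticeX q c2 c1 c3) := by
      have : latticeX q c1 c2 c3 = (latticeX q c2 c1 c3) ∘ (fun s => -s) := by
        funext s; exact latticeX_swap q c1 c2 c3 s
      rw [this, Set.range_comp, (neg_surjective).range_eq, Set.image_univ]
    rw [this]
    exact range_infinite_aux q hq hq1 c2 c1 c3 h1
  · exact range_infinite_aux q hq hq1 c1 c2 c3 h2

theorem Sx_product_rule (q : ℝ) (hq : 0 < q) (hq1 : q ≠ 1)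
    (c1 c2 c3 : ℂ) (hc : ¬(c1 = 0 ∧ c2 = 0))
    (f g Df Sf Dg Sg Sfg : Polynomial ℂ)
    (hDf : IsDx q c1 c2 c3 f Df) (hSf : IsSx q c1 c2 c3 f Sf)
    (hDg : IsDx q c1 c2 c3 g Dg) (hSg : IsSx q c1 c2 c3 g Sg)
    (hSfg : IsSx q c1 c2 c3 (f * g) Sfg) :
    Sfg = Df * Dg *
        (C ((((alphaSeq q 1 : ℝ) : ℂ)) ^ 2 - 1) * X ^ 2 +
          C (2 * ((1 - ((alphaSeq q 1 : ℝ) : ℂ)) * c3) * (((alphaSeq q 1 : ℝ) : ℂ) + 1)) * X +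
          C ((((alphaSeq q 1 : ℝ) : ℂ) ^ 2 - 1) * (c3 ^ 2 - 4 * c1 * c2))) +
      Sf * Sg := by
  set α : ℂ := ((alphaSeq q 1 : ℝ) : ℂ) with hαdef
  set P : Polynomial ℂ := Sfg - (Df * Dg *
        (C (α ^ 2 - 1) * X ^ 2 + C (2 * ((1 - α) * c3) * (α + 1)) * X +
          C ((α ^ 2 - 1) * (c3 ^ 2 - 4 * c1 * c2))) + Sf * Sg) with hP
  have key : ∀ s : ℝ, P.eval (latticeX q c1 c2 c3 s) = 0 := by
    intro s
    set u : ℝ := q ^ s with hu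
    set a : ℝ := q ^ ((1:ℝ)/2) with ha
    have hupos : 0 < u := Real.rpow_pos_of_pos hq _
    have hapos : 0 < a := Real.rpow_pos_of_pos hq _
    have hu0 : ((u : ℝ) : ℂ) ≠ 0 := by exact_mod_cast hupos.ne'
    have ha0 : ((a : ℝ) : ℂ) ≠ 0 := by exact_mod_cast hapos.ne'
    have hv : (u : ℂ) * ((u : ℂ))⁻¹ = 1 := mul_inv_cancel₀ hu0
    have hb : (a : ℂ) * ((a : ℂ))⁻¹ = 1 := mul_inv_cancel₀ ha0
    have hα : α = ((a:ℂ) + ((a:ℂ))⁻¹) / 2 := by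
      rw [hαdef, alphaSeq_one q hq]
      push_cast
      ring
    have h0 : latticeX q c1 c2 c3 s = c1 * ((u:ℂ))⁻¹ + c2 * (u:ℂ) + c3 :=
      latticeX_eq q hq c1 c2 c3 s
    have hp : latticeX q c1 c2 c3 (s + 1/2)
        = c1 * (((u:ℂ))⁻¹ * ((a:ℂ))⁻¹) + c2 * ((u:ℂ) * (a:ℂ)) + c3 := by
      rw [latticeX_eq q hq, Real.rpow_add hq]
      push_cast
      rw [mul_inv]
    have hm : latticeX q c1 c2 c3 (s - 1/2)
        = c1 * (((u:ℂ))⁻¹ * (a:ℂ)) + c2 * ((u:ℂ) * ((a:ℂ))⁻¹) + c3 := by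
      rw [latticeX_eq q hq, Real.rpow_sub hq]
      push_cast
      rw [div_eq_mul_inv, mul_inv, inv_inv]
    have ed := hDf s; have eg := hDg s; have esf := hSf s
    have esg := hSg s; have esfg := hSfg s
    simp only [eval_mul] at esfg
    rw [h0, hp, hm] at ed eg esf esg esfg
    rw [hP]
    simp only [eval_sub, eval_add, eval_mul, eval_pow, eval_C, eval_X]
    rw [h0, sub_eq_zero]
    set x0 : ℂ := c1 * ((u:ℂ))⁻¹ + c2 * (u:ℂ) + c3 with hx0
    set xp : ℂ := c1 * (((u:ℂ))⁻¹ * ((a:ℂ))⁻¹) + c2 * ((u:ℂ) * (a:ℂ)) + c3 with hxp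
    set xm : ℂ := c1 * (((u:ℂ))⁻¹ * (a:ℂ)) + c2 * ((u:ℂ) * ((a:ℂ))⁻¹) + c3 with hxm
    have hU : (α^2 - 1) * x0^2 + 2*((1-α)*c3)*(α+1)*x0 + (α^2-1)*(c3^2 - 4*c1*c2)
        = ((xp - xm)/2)^2 := by
      rw [hα, hx0, hxp, hxm]
      linear_combination (c1*c2*(((a:ℂ))⁻¹^2 + (a:ℂ)^2 - 2)) * hv +
        (c1^2*((u:ℂ))⁻¹^2 + c2^2*(u:ℂ)^2 - 2*c1*c2) * hb
    linear_combination esfg - (Sg.eval x0) * esf - ((f.eval xp + f.eval xm)/2) * esg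
      - (Df.eval x0 * Dg.eval x0) * hU - ((g.eval xp - g.eval xm)/4) * ed
      - (Df.eval x0 * (xp - xm)/4) * eg
  have hroot : P = 0 := by
    apply Polynomial.eq_zero_of_infinite_isRoot
    apply (range_infinite q hq hq1 c1 c2 c3 hc).mono
    rintro x ⟨s, rfl⟩
    exact key s
  have := sub_eq_zero.mp (hP ▸ hroot)
  exact this
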